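/- Let (Ω, μ) be a probability space, f: Ω → Ω a measure-preserving map, G: Ω → GL(m, ℝ) measurable, and 𝒢 the associated matrix cocycle. Suppose (E(ω))_{ω∈Ω} is a family of linear subspaces of ℝ^m with G(ω) E(ω) = E(f(ω)) for all ω. Fix constants λ > 0, ε ∈ (0, λ), and a measurable function C: Ω → [1, ∞) with C ∈ L²(μ) such that for μ-a.e. ω and all n ≥ 0: ‖𝒢(n, ω) v‖ ≤ C(ω) e^{(λ+ε)n} ‖v‖ for all v ∈ E(ω), and ‖𝒢(n, ω)^{−1} v‖ ≤ C(ω) e^{−(λ−ε)n} ‖v‖ for all v ∈ E(fⁿω). Let d: Ω → ℝ^m be measurable with d(ω') ∈ E(ω') for all ω' and sup_{ω'} ‖d(ω')‖ =: D∞ < ∞. Then for every n ≥ 1: ∫_Ω ‖(Ψⁿ d)(ω)‖ dμ(ω) ≤ ‖C‖²_{L²(μ)} D∞ (e^{(λ−ε)} − 1)^{−1} e^{n(λ+ε)}. -/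

import Mathlib

open Filter Topology MeasureTheory

/-- The matrix cocycle over (Ω, f) generated by G : Ω → GL(m, ℝ):
𝒢(0, ω) = Id and 𝒢(n, ω) = G(f^{n−1}ω) ⋯ G(ω). -/
def matCocycle {Ω : Type*} {m : ℕ} (f : Ω → Ω)
    (G : Ω → Matrix.GeneralLinearGroup (Fin m) ℝ) :
    ℕ → Ω → Matrix.GeneralLinearGroup (Fin m) ℝ
  | 0, _ => 1
  | n + 1, ω => matCocycle f G n (f ω) * G ω

/-- The graph-transform operator (Ψⁿ d)(ω) = Σ_{j=1}^{n} 𝒢(n−j, f^{j}ω) d(f^{j}ω). -/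
noncomputable def graphTransform {Ω : Type*} {m : ℕ} (f : Ω → Ω)
    (G : Ω → Matrix.GeneralLinearGroup (Fin m) ℝ) (d : Ω → (Fin m → ℝ))
    (n : ℕ) (ω : Ω) : Fin m → ℝ :=
  ∑ j ∈ Finset.Icc 1 n,
    ((matCocycle f G (n - j) (f^[j] ω) : Matrix (Fin m) (Fin m) ℝ)).mulVec (d (f^[j] ω))

/-- integrated (L¹) growth bound for the graph transform under
the hypothesis of L² Pesin sets (square-integrable non-uniform hyperbolicity
constant C(ω)): ∫‖Ψⁿd‖ dμ ≤ ‖C‖²_{L²(μ)} D∞ (e^{λ−ε} − 1)⁻¹ e^{(λ+ε)n}. -/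
theorem graphTransform_growth_integrated {Ω : Type*} {m : ℕ} [MeasurableSpace Ω]
    (μ : Measure Ω) [IsProbabilityMeasure μ]
    (f : Ω → Ω) (hf : MeasurePreserving f μ μ)
    (G : Ω → Matrix.GeneralLinearGroup (Fin m) ℝ)
    (hG : ∀ i j : Fin m, Measurable fun ω => (G ω : Matrix (Fin m) (Fin m) ℝ) i j)
    (E : Ω → Submodule ℝ (Fin m → ℝ))
    (hE : ∀ ω' : Ω,
      Submodule.map ((G ω' : Matrix (Fin m) (Fin m) ℝ)).mulVecLin (E ω') = E (f ω'))
    (lam ε : ℝ) (hlam : 0 < lam) (hε0 : 0 < ε) (hεlam : ε < lam)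
    (C : Ω → ℝ) (hC1 : ∀ ω : Ω, 1 ≤ C ω) (hCmeas : Measurable C)
    (hCL2 : MemLp C 2 μ)
    (hbound : ∀ᵐ ω ∂μ, ∀ n : ℕ,
      (∀ v ∈ E ω,
        ‖((matCocycle f G n ω : Matrix (Fin m) (Fin m) ℝ)).mulVec v‖
          ≤ C ω * Real.exp ((lam + ε) * n) * ‖v‖) ∧
      (∀ v ∈ E (f^[n] ω),
        ‖(((matCocycle f G n ω)⁻¹ : Matrix (Fin m) (Fin m) ℝ)).mulVec v‖
          ≤ C ω * Real.exp (-(lam - ε) * n) * ‖v‖))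
    (d : Ω → (Fin m → ℝ)) (hd : Measurable d) (hdE : ∀ ω' : Ω, d ω' ∈ E ω')
    (Dinf : ℝ) (hDinf : ∀ ω' : Ω, ‖d ω'‖ ≤ Dinf) :
    ∀ n : ℕ, 1 ≤ n →
      ∫ ω, ‖graphTransform f G d n ω‖ ∂μ
        ≤ (∫ ω, (C ω) ^ 2 ∂μ) * Dinf * (Real.exp (lam - ε) - 1)⁻¹ *
            Real.exp ((lam + ε) * n) := by
  intro n hn
  -- Ω is nonempty, since μ is a probability measure
  have hΩ : Nonempty Ω := by
    by_contra h
    rw [not_nonempty_iff] at h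
    have h1 : μ Set.univ = 1 := measure_univ
    have h0 : (Set.univ : Set Ω) = ∅ := Set.univ_eq_empty_iff.mpr h
    rw [h0, measure_empty] at h1
    exact zero_ne_one h1
  have hD0 : 0 ≤ Dinf := (norm_nonneg _).trans (hDinf hΩ.some)
  -- integrability of C and C²
  have hIntC : Integrable C μ := hCL2.integrable one_le_two
  have hIntC2 : Integrable (fun ω => C ω ^ 2) μ := hCL2.integrable_sq
  set x : ℝ := Real.exp (lam + ε) with hx
  have hx1 : 1 < x := by
    rw [hx]
    have : (0 : ℝ) < lam + ε := by linarith
    calc (1 : ℝ) = Real.exp 0 := (Real.exp_zero).symm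
      _ < Real.exp (lam + ε) := Real.exp_lt_exp.mpr this
  have hx0 : 0 < x := lt_trans one_pos hx1
  -- the exponential coefficient for each term
  set e : ℕ → ℝ := fun j => Real.exp ((lam + ε) * (n - j : ℕ)) with he
  have he' : ∀ j, e j = x ^ (n - j) := by
    intro j
    rw [he, hx]
    simp only
    rw [← Real.exp_nat_mul]
    ring_nf
  have he0 : ∀ j, 0 ≤ e j := fun j => (Real.exp_pos _).le
  -- the dominating function
  set g : Ω → ℝ := fun ω => ∑ j ∈ Finset.Icc 1 n, C (f^[j] ω) * (e j * Dinf) with hg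
  -- each term is integrable
  have hterm_int : ∀ j ∈ Finset.Icc 1 n,
      Integrable (fun ω => C (f^[j] ω) * (e j * Dinf)) μ := by
    intro j _
    exact (((hf.iterate j).integrable_comp hCmeas.aestronglyMeasurable).mpr
      hIntC).mul_const _
  have hg_int : Integrable g μ := by
    rw [hg]
    exact integrable_finset_sum _ hterm_int
  -- a.e. bound at all iterates
  have hae : ∀ᵐ ω ∂μ, ∀ j : ℕ, ∀ k : ℕ, ∀ v ∈ E (f^[j] ω),
      ‖((matCocycle f G k (f^[j] ω) : Matrix (Fin m) (Fin m) ℝ)).mulVec v‖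
        ≤ C (f^[j] ω) * Real.exp ((lam + ε) * k) * ‖v‖ := by
    rw [ae_all_iff]
    intro j
    have hj := ((hf.iterate j).quasiMeasurePreserving).ae hbound
    filter_upwards [hj] with ω h k v hv
    exact (h k).1 v hv
  -- pointwise comparison ‖Ψⁿd‖ ≤ g a.e.
  have hle : ∀ᵐ ω ∂μ, ‖graphTransform f G d n ω‖ ≤ g ω := by
    filter_upwards [hae] with ω h
    rw [graphTransform, hg]
    refine (norm_sum_le _ _).trans (Finset.sum_le_sum fun j _ => ?_)
    have hb := h j (n - j) (d (f^[j] ω)) (hdE _)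
    refine hb.trans ?_
    have hC0 : 0 ≤ C (f^[j] ω) := le_trans zero_le_one (hC1 _)
    have : C (f^[j] ω) * Real.exp ((lam + ε) * (n - j : ℕ)) * ‖d (f^[j] ω)‖
        ≤ C (f^[j] ω) * Real.exp ((lam + ε) * (n - j : ℕ)) * Dinf :=
      mul_le_mul_of_nonneg_left (hDinf _)
        (mul_nonneg hC0 (Real.exp_pos _).le)
    refine this.trans ?_
    rw [he]
    ring_nf
    exact le_refl _
  -- step 1 : integral comparison
  have step1 : ∫ ω, ‖graphTransform f G d n ω‖ ∂μ ≤ ∫ ω, g ω ∂μ :=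
    integral_mono_of_nonneg (Filter.Eventually.of_forall fun ω => norm_nonneg _)
      hg_int hle
  -- step 2 : compute ∫ g
  have hcomp : ∀ j : ℕ, ∫ ω, C (f^[j] ω) ∂μ = ∫ ω, C ω ∂μ := by
    intro j
    calc ∫ ω, C (f^[j] ω) ∂μ
        = ∫ ω, C ω ∂(μ.map f^[j]) :=
          (integral_map (hf.iterate j).measurable.aemeasurable
            hCmeas.aestronglyMeasurable).symm
      _ = ∫ ω, C ω ∂μ := by rw [(hf.iterate j).map_eq]
  set A : ℝ := ∫ ω, C ω ∂μ with hA
  set S : ℝ := ∑ j ∈ Finset.Icc 1 n, e j with hS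
  have step2 : ∫ ω, g ω ∂μ = A * Dinf * S := by
    rw [hg, integral_finset_sum _ hterm_int]
    have : ∀ j ∈ Finset.Icc 1 n,
        ∫ ω, C (f^[j] ω) * (e j * Dinf) ∂μ = A * Dinf * e j := by
      intro j _
      rw [integral_mul_const, hcomp j]
      ring
    rw [Finset.sum_congr rfl this, ← Finset.mul_sum, hS]
  -- step 3 : bound on the geometric sum
  have hSsum : S = ∑ k ∈ Finset.range n, x ^ k := by
    rw [hS]
    have : ∀ j ∈ Finset.Icc 1 n, e j = x ^ (n - j) := fun j _ => he' j
    rw [Finset.sum_congr rfl this]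
    refine Finset.sum_nbij' (fun j => n - j) (fun k => n - k) ?_ ?_ ?_ ?_ ?_
    · intro j hj
      simp only [Finset.mem_Icc] at hj
      simp only [Finset.mem_range]
      omega
    · intro k hk
      simp only [Finset.mem_range] at hk
      simp only [Finset.mem_Icc]
      omega
    · intro j hj
      simp only [Finset.mem_Icc] at hj
      omega
    · intro k hk
      simp only [Finset.mem_range] at hk
      omega
    · intro j _
      rfl
  set T : ℝ := (Real.exp (lam - ε) - 1)⁻¹ * Real.exp ((lam + ε) * n) with hT
  have hd1 : (0 : ℝ) < Real.exp (lam - ε) - 1 := by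
    have : (0 : ℝ) < lam - ε := by linarith
    have h1 : (1 : ℝ) < Real.exp (lam - ε) := by
      calc (1 : ℝ) = Real.exp 0 := (Real.exp_zero).symm
        _ < Real.exp (lam - ε) := Real.exp_lt_exp.mpr this
    linarith
  have hxn : x ^ n = Real.exp ((lam + ε) * n) := by
    rw [hx, ← Real.exp_nat_mul]
    ring_nf
  have hST : S ≤ T := by
    rw [hSsum, geom_sum_eq (ne_of_gt hx1), hT, ← hxn]
    rw [div_eq_mul_inv, mul_comm ((Real.exp (lam - ε) - 1)⁻¹) (x ^ n)]
    have hxn1 : x ^ n - 1 ≤ x ^ n := by linarith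
    have hx1' : (0 : ℝ) < x - 1 := by linarith
    have hd2 : Real.exp (lam - ε) - 1 ≤ x - 1 := by
      have : Real.exp (lam - ε) ≤ x := by
        rw [hx]
        exact Real.exp_le_exp.mpr (by linarith)
      linarith
    calc (x ^ n - 1) / (x - 1) ≤ x ^ n / (x - 1) :=
          (div_le_div_iff_of_pos_right hx1').mpr hxn1
      _ ≤ x ^ n * (Real.exp (lam - ε) - 1)⁻¹ := by
          rw [div_eq_mul_inv]
          exact mul_le_mul_of_nonneg_left
            (inv_anti₀ hd1 hd2) (pow_nonneg hx0.le n)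
  have hS0 : 0 ≤ S := Finset.sum_nonneg fun j _ => he0 j
  have hT0 : 0 ≤ T := le_trans hS0 hST
  -- ∫ C ≤ ∫ C²
  have hA0 : 0 ≤ A := integral_nonneg fun ω => le_trans zero_le_one (hC1 ω)
  have hAB : A ≤ ∫ ω, C ω ^ 2 ∂μ := by
    refine integral_mono hIntC hIntC2 fun ω => ?_
    have h1 := hC1 ω
    nlinarith
  have hB0 : 0 ≤ ∫ ω, C ω ^ 2 ∂μ := le_trans hA0 hAB
  -- conclude
  refine step1.trans ?_
  rw [step2]
  have key : A * S ≤ (∫ ω, C ω ^ 2 ∂μ) * T :=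
    mul_le_mul hAB hST hS0 hB0
  calc A * Dinf * S = (A * S) * Dinf := by ring
    _ ≤ ((∫ ω, C ω ^ 2 ∂μ) * T) * Dinf :=
        mul_le_mul_of_nonneg_right key hD0
    _ = (∫ ω, (C ω) ^ 2 ∂μ) * Dinf * (Real.exp (lam - ε) - 1)⁻¹ *
            Real.exp ((lam + ε) * n) := by rw [hT]; ring
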